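/- With b_n = (-1)^n B_n/n!, for every even integer n > 2 the polynomial b_n ∑_{i=0}^{n-1} s^i + ∑_{k=2}^{n-2} b_k b_{n-k} (t^{k-1} - s^{n-k} t^{k-1}) is congruent, modulo the ideal generated by s + t - 1 in ℚ[s,t][t^{-1}], to ∑_{k=0}^{n} b_k b_{n-k} (1 - s^{n-k}) t^{k-1}. -/

import Mathlib

open Finset LaurentPolynomial

noncomputable section

/-- The Laurent polynomial ring `ℚ[s,t,t⁻¹]`, realized as Laurent polynomials in `t`
over `ℚ[s]`. -/
abbrev LRing : Type := LaurentPolynomial (Polynomial ℚ)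

/-- The variable `s`. -/
def sL : LRing := LaurentPolynomial.C Polynomial.X

/-- The variable `t`. -/
def tL : LRing := LaurentPolynomial.T 1

/-- The scalar embedding `ℚ → ℚ[s,t,t⁻¹]`. -/
def cL (q : ℚ) : LRing := LaurentPolynomial.C (Polynomial.C q)

/-- `b_n = (-1)^n B_n / n!`. -/
def bG (n : ℕ) : ℚ := (-1) ^ n * bernoulli n / n.factorial

/-- For every even `n > 2`, the Laurent polynomial
`b_n ∑_{i=0}^{n-1} s^i + ∑_{k=2}^{n-2} b_k b_{n-k} (t^{k-1} - s^{n-k} t^{k-1})`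
is congruent, modulo the ideal `(s + t - 1)` of `ℚ[s,t,t⁻¹]`, to
`∑_{k=0}^{n} b_k b_{n-k} (1 - s^{n-k}) t^{k-1}`. -/
theorem stmt_7 (n : ℕ) (hn : 2 < n) (hev : Even n) :
    (cL (bG n) * ∑ i ∈ range n, sL ^ i
        + ∑ k ∈ Finset.Icc 2 (n - 2), cL (bG k * bG (n - k)) *
            (LaurentPolynomial.T ((k : ℤ) - 1)
              - sL ^ (n - k) * LaurentPolynomial.T ((k : ℤ) - 1)))
      - (∑ k ∈ range (n + 1), cL (bG k * bG (n - k)) *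
            ((1 - sL ^ (n - k)) * LaurentPolynomial.T ((k : ℤ) - 1)))
      ∈ Ideal.span {sL + tL - 1} := by
  obtain ⟨m, rfl⟩ : ∃ m, n = m + 3 := ⟨n - 3, by omega⟩
  have hodd : Odd (m + 2) := by
    rcases hev with ⟨r, hr⟩
    exact ⟨r - 1, by omega⟩
  have hb0 : bG 0 = 1 := by simp [bG]
  have hbn1 : bG (m + 2) = 0 := by
    rw [bG, bernoulli_eq_bernoulli'_of_ne_one (by omega), bernoulli'_eq_zero_of_odd hodd (by omega)]
    simp
  have hR : (∑ k ∈ range (m + 3 + 1), cL (bG k * bG (m + 3 - k)) *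
            ((1 - sL ^ (m + 3 - k)) * LaurentPolynomial.T ((k : ℤ) - 1)))
      = cL (bG (m + 3)) * ((1 - sL ^ (m + 3)) * LaurentPolynomial.T (-1))
        + ∑ k ∈ Finset.Icc 2 (m + 1), cL (bG k * bG (m + 3 - k)) *
            ((1 - sL ^ (m + 3 - k)) * LaurentPolynomial.T ((k : ℤ) - 1)) := by
    rw [Finset.sum_range_succ, Finset.sum_range_succ]
    have h1 : m + 3 - (m + 3) = 0 := by omega
    have h2 : m + 3 - (m + 2) = 1 := by omega
    rw [h1, h2, hbn1]
    have : ∑ k ∈ range (m + 2), cL (bG k * bG (m + 3 - k)) *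
            ((1 - sL ^ (m + 3 - k)) * LaurentPolynomial.T ((k : ℤ) - 1))
        = ∑ k ∈ Finset.Ico 0 2, cL (bG k * bG (m + 3 - k)) *
            ((1 - sL ^ (m + 3 - k)) * LaurentPolynomial.T ((k : ℤ) - 1))
          + ∑ k ∈ Finset.Ico 2 (m + 2), cL (bG k * bG (m + 3 - k)) *
            ((1 - sL ^ (m + 3 - k)) * LaurentPolynomial.T ((k : ℤ) - 1)) := by
      rw [Finset.range_eq_Ico,
        Finset.sum_Ico_consecutive _ (by omega : 0 ≤ 2) (by omega : 2 ≤ m + 2)]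
    rw [this]
    have hIcc : Finset.Icc 2 (m + 1) = Finset.Ico 2 (m + 2) := by
      rw [← Finset.Ico_add_one_right_eq_Icc]; rfl
    rw [hIcc]
    have hIco02 : Finset.Ico 0 2 = range 2 := by rw [Finset.range_eq_Ico]
    rw [hIco02, Finset.sum_range_succ, Finset.sum_range_one]
    have h3 : m + 3 - 1 = m + 2 := by omega
    rw [h3, hbn1, hb0]
    simp [cL]
  rw [hR]
  have hmid : ∀ k ∈ Finset.Icc 2 (m + 1), cL (bG k * bG (m + 3 - k)) *
            (LaurentPolynomial.T ((k : ℤ) - 1)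
              - sL ^ (m + 3 - k) * LaurentPolynomial.T ((k : ℤ) - 1))
      = cL (bG k * bG (m + 3 - k)) *
            ((1 - sL ^ (m + 3 - k)) * LaurentPolynomial.T ((k : ℤ) - 1)) := by
    intro k _; ring
  have h32 : m + 3 - 2 = m + 1 := by omega
  rw [h32, Finset.sum_congr rfl hmid]
  rw [Ideal.mem_span_singleton']
  refine ⟨cL (bG (m + 3)) * LaurentPolynomial.T (-1) * ∑ i ∈ range (m + 3), sL ^ i, ?_⟩
  have h1 : tL * LaurentPolynomial.T (-1) = 1 := by
    rw [tL, ← LaurentPolynomial.T_add]; norm_num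
  have hg : (∑ i ∈ range (m + 3), sL ^ i) * (sL - 1) = sL ^ (m + 3) - 1 :=
    geom_sum_mul sL (m + 3)
  linear_combination (cL (bG (m + 3)) * LaurentPolynomial.T (-1)) * hg
    + (cL (bG (m + 3)) * ∑ i ∈ range (m + 3), sL ^ i) * h1
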